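/- Let 0 < p ≤ 1, let (Ω, 𝓕, P) be a probability space, let (X_n)_{n≥0} be a sequence of real random variables with X_0 = 1 almost surely and X_n ∈ (0,1] almost surely for all n, and let 𝓕_n = σ(X_0, X_1, …, X_n) be the natural filtration. Assume that for every n ≥ 1 and every x ∈ [0,1), the conditional expectation satisfies E[1_{X_n > x} | 𝓕_{n−1}] = (1 − p·x)·1_{X_{n−1} > x} almost surely. Then for every positive integer n and all x_1, …, x_n ∈ [0,1), P(X_1 > x_1 and X_2 > x_2 and … and X_n > x_n) = ∏_{i=1}^{n} (1 − p·max(x_{n−i+1}, x_{n−i+2}, …, x_n)). -/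

import Mathlib

open MeasureTheory

private lemma biSup_eq_sup' (x : ℕ → ℝ) (hx0 : ∀ i, 0 ≤ x i) (hx1 : ∀ i, x i ≤ 1)
    (s : Finset ℕ) (hs : s.Nonempty) :
    (⨆ j ∈ s, x j) = s.sup' hs x := by
  obtain ⟨k, hk⟩ := hs
  have hsup0 : (0 : ℝ) ≤ s.sup' ⟨k, hk⟩ x := le_trans (hx0 k) (Finset.le_sup' x hk)
  apply le_antisymm
  · refine Real.iSup_le (fun j => ?_) hsup0
    by_cases h : j ∈ s
    · rw [ciSup_pos h]; exact Finset.le_sup' x h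
    · have : IsEmpty (j ∈ s) := ⟨h⟩
      rw [Real.iSup_of_isEmpty]; exact hsup0
  · refine Finset.sup'_le _ _ fun j hj => ?_
    have hb : BddAbove (Set.range fun j => ⨆ _ : j ∈ s, x j) := by
      refine ⟨1, ?_⟩
      rintro y ⟨j, rfl⟩
      exact Real.iSup_le (fun _ => hx1 j) one_pos.le
    refine le_trans ?_ (le_ciSup hb j)
    rw [ciSup_pos hj]

private lemma step_aux {Ω : Type*} {m : MeasurableSpace Ω} [m0 : MeasurableSpace Ω]
    (P : Measure Ω) [IsProbabilityMeasure P] (hm : m ≤ m0)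
    {A A' B : Set Ω} (hA : MeasurableSet[m0] A) (hA' : MeasurableSet[m0] A')
    (hB : MeasurableSet[m] B) {c : ℝ}
    (h : P[A.indicator (fun _ => (1 : ℝ)) | m] =ᵐ[P]
      fun ω => c * A'.indicator (fun _ => (1 : ℝ)) ω) :
    (P (A ∩ B)).toReal = c * (P (A' ∩ B)).toReal := by
  have hint : Integrable (A.indicator fun _ => (1 : ℝ)) P :=
    (integrable_const 1).indicator hA
  have key : ∀ (S : Set Ω), MeasurableSet[m0] S →
      ∫ ω in B, S.indicator (fun _ => (1 : ℝ)) ω ∂P = (P (S ∩ B)).toReal := by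
    intro S hS
    rw [setIntegral_indicator hS, setIntegral_const, smul_eq_mul, mul_one, Set.inter_comm]
    rfl
  calc (P (A ∩ B)).toReal
      = ∫ ω in B, A.indicator (fun _ => (1 : ℝ)) ω ∂P := (key A hA).symm
    _ = ∫ ω in B, (P[A.indicator (fun _ => (1 : ℝ))|m]) ω ∂P :=
        (setIntegral_condExp hm hint hB).symm
    _ = ∫ ω in B, c * A'.indicator (fun _ => (1 : ℝ)) ω ∂P :=
        integral_congr_ae (ae_restrict_of_ae h)
    _ = c * ∫ ω in B, A'.indicator (fun _ => (1 : ℝ)) ω ∂P := integral_const_mul _ _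
    _ = c * (P (A' ∩ B)).toReal := by rw [key A' hA']

theorem stmt3 {Ω : Type*} [m0 : MeasurableSpace Ω] (P : Measure Ω) [IsProbabilityMeasure P]
    (p : ℝ) (hp : 0 < p) (hp1 : p ≤ 1)
    (X : ℕ → Ω → ℝ) (hXmeas : ∀ n, Measurable (X n))
    (hX0 : ∀ᵐ ω ∂P, X 0 ω = 1)
    (hXmem : ∀ n, ∀ᵐ ω ∂P, X n ω ∈ Set.Ioc (0 : ℝ) 1)
    (F : ℕ → MeasurableSpace Ω)
    (hF : ∀ n, F n = ⨆ i ≤ n, MeasurableSpace.comap (X i) Real.measurableSpace)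
    (hcond : ∀ n : ℕ, 1 ≤ n → ∀ x ∈ Set.Ico (0 : ℝ) 1,
      P[Set.indicator {ω | x < X n ω} (fun _ => (1 : ℝ)) | F (n - 1)] =ᵐ[P]
        fun ω => (1 - p * x) * Set.indicator {ω' | x < X (n - 1) ω'} (fun _ => (1 : ℝ)) ω) :
    ∀ n : ℕ, 1 ≤ n → ∀ x : ℕ → ℝ, (∀ i, x i ∈ Set.Ico (0 : ℝ) 1) →
      P {ω | ∀ i ∈ Finset.Icc 1 n, x i < X i ω} =
        ENNReal.ofReal (∏ i ∈ Finset.Icc 1 n, (1 - p * ⨆ j ∈ Finset.Icc i n, x j)) := by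
  have hm : ∀ n, F n ≤ m0 := by
    intro n; rw [hF n]
    exact iSup₂_le fun i _ => (hXmeas i).comap_le
  have hmeasB : ∀ n (x : ℕ → ℝ),
      MeasurableSet[F n] {ω | ∀ i ∈ Finset.Icc 1 n, x i < X i ω} := by
    intro n x
    have heq : {ω | ∀ i ∈ Finset.Icc 1 n, x i < X i ω}
        = ⋂ i ∈ Finset.Icc 1 n, X i ⁻¹' Set.Ioi (x i) := by
      ext ω; simp [Set.mem_iInter]
    rw [heq]
    refine Finset.measurableSet_biInter _ fun i hi => ?_
    have hle : MeasurableSpace.comap (X i) Real.measurableSpace ≤ F n := by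
      rw [hF n]
      exact le_iSup₂ (f := fun i (_ : i ≤ n) =>
        MeasurableSpace.comap (X i) Real.measurableSpace) i (Finset.mem_Icc.mp hi).2
    exact hle _ ⟨Set.Ioi (x i), measurableSet_Ioi, rfl⟩
  have main : ∀ n : ℕ, 1 ≤ n → ∀ x : ℕ → ℝ, (∀ i, x i ∈ Set.Ico (0 : ℝ) 1) →
      (P {ω | ∀ i ∈ Finset.Icc 1 n, x i < X i ω}).toReal =
        ∏ i ∈ Finset.Icc 1 n, (1 - p * ⨆ j ∈ Finset.Icc i n, x j) := by
    intro n
    induction n with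
    | zero => intro h; omega
    | succ n ih =>
      intro _ x hx
      have hx0 : ∀ i, 0 ≤ x i := fun i => (hx i).1
      have hx1 : ∀ i, x i ≤ 1 := fun i => (hx i).2.le
      have hsupself : ∀ k, (⨆ j ∈ Finset.Icc k k, x j) = x k := fun k => by
        rw [biSup_eq_sup' x hx0 hx1 _ ⟨k, by simp⟩]
        simp [Finset.Icc_self]
      have hsplit : {ω | ∀ i ∈ Finset.Icc 1 (n + 1), x i < X i ω}
          = {ω | x (n + 1) < X (n + 1) ω} ∩ {ω | ∀ i ∈ Finset.Icc 1 n, x i < X i ω} := by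
        ext ω
        simp only [Set.mem_inter_iff, Set.mem_setOf_eq, Finset.mem_Icc]
        constructor
        · intro h
          exact ⟨h (n + 1) ⟨by omega, le_rfl⟩, fun i hi => h i ⟨hi.1, by omega⟩⟩
        · rintro ⟨h1, h2⟩ i hi
          rcases eq_or_lt_of_le hi.2 with rfl | hlt
          · exact h1
          · exact h2 i ⟨hi.1, by omega⟩
      have hcond' := hcond (n + 1) (by omega) (x (n + 1)) (hx (n + 1))
      simp only [Nat.add_sub_cancel] at hcond'
      have hstep := step_aux P (hm n)
        (measurableSet_lt measurable_const (hXmeas (n + 1)))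
        (measurableSet_lt measurable_const (hXmeas n)) (hmeasB n x) hcond'
      rw [hsplit, hstep]
      rcases Nat.eq_zero_or_pos n with rfl | hn1
      · -- base case n = 0
        have hBuniv : {ω | ∀ i ∈ Finset.Icc 1 0, x i < X i ω} = Set.univ := by
          ext ω; simp
        have h1 : P ({ω | x 1 < X 0 ω} ∩ Set.univ) = 1 := by
          rw [← measure_univ (μ := P)]
          apply measure_congr
          rw [Filter.eventuallyEq_set]
          filter_upwards [hX0] with ω h
          simp only [Set.mem_inter_iff, Set.mem_setOf_eq, Set.mem_univ, and_true, iff_true]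
          rw [h]; exact (hx 1).2
        rw [hBuniv, h1, ENNReal.toReal_one, Finset.Icc_self, Finset.prod_singleton,
          hsupself 1]
        ring
      · -- inductive case n ≥ 1
        set x' : ℕ → ℝ := Function.update x n (max (x n) (x (n + 1))) with hx'def
        have hx' : ∀ i, x' i ∈ Set.Ico (0 : ℝ) 1 := by
          intro i
          by_cases h : i = n
          · rw [h, hx'def, Function.update_self]
            exact ⟨le_max_of_le_left (hx n).1, max_lt (hx n).2 (hx (n + 1)).2⟩
          · rw [hx'def, Function.update_of_ne h]
            exact hx i
        have hx'0 : ∀ i, 0 ≤ x' i := fun i => (hx' i).1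
        have hx'1 : ∀ i, x' i ≤ 1 := fun i => (hx' i).2.le
        have hseteq : {ω | x (n + 1) < X n ω} ∩ {ω | ∀ i ∈ Finset.Icc 1 n, x i < X i ω}
            = {ω | ∀ i ∈ Finset.Icc 1 n, x' i < X i ω} := by
          ext ω
          simp only [Set.mem_inter_iff, Set.mem_setOf_eq]
          constructor
          · rintro ⟨h1, h2⟩ i hi
            by_cases h : i = n
            · rw [h, hx'def, Function.update_self]
              exact max_lt (h2 n (h ▸ hi)) h1
            · rw [hx'def, Function.update_of_ne h]
              exact h2 i hi
          · intro h
            have hn : x' n < X n ω := h n (Finset.mem_Icc.mpr ⟨hn1, le_rfl⟩)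
            rw [hx'def, Function.update_self] at hn
            refine ⟨lt_of_le_of_lt (le_max_right _ _) hn, fun i hi => ?_⟩
            by_cases hin : i = n
            · rw [hin]
              exact lt_of_le_of_lt (le_max_left _ _) hn
            · have := h i hi
              rwa [hx'def, Function.update_of_ne hin] at this
        have hsup_eq : ∀ i ∈ Finset.Icc 1 n,
            (⨆ j ∈ Finset.Icc i n, x' j) = ⨆ j ∈ Finset.Icc i (n + 1), x j := by
          intro i hi
          obtain ⟨hi1, hin⟩ := Finset.mem_Icc.mp hi
          rw [biSup_eq_sup' x' hx'0 hx'1 _ (Finset.nonempty_Icc.mpr hin),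
            biSup_eq_sup' x hx0 hx1 _ (Finset.nonempty_Icc.mpr (by omega))]
          apply le_antisymm
          · refine Finset.sup'_le _ _ fun j hj => ?_
            obtain ⟨hj1, hj2⟩ := Finset.mem_Icc.mp hj
            by_cases h : j = n
            · rw [h, hx'def, Function.update_self]
              exact max_le (Finset.le_sup' x (Finset.mem_Icc.mpr ⟨by omega, by omega⟩))
                (Finset.le_sup' x (Finset.mem_Icc.mpr ⟨by omega, le_rfl⟩))
            · rw [hx'def, Function.update_of_ne h]
              exact Finset.le_sup' x (Finset.mem_Icc.mpr ⟨hj1, by omega⟩)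
          · refine Finset.sup'_le _ _ fun j hj => ?_
            obtain ⟨hj1, hj2⟩ := Finset.mem_Icc.mp hj
            by_cases h : j = n + 1
            · rw [h]
              have hle : x (n + 1) ≤ x' n := by
                rw [hx'def, Function.update_self]; exact le_max_right _ _
              exact hle.trans (Finset.le_sup' x' (Finset.mem_Icc.mpr ⟨hin, le_rfl⟩))
            · by_cases h2 : j = n
              · rw [h2]
                have hle : x n ≤ x' n := by
                  rw [hx'def, Function.update_self]; exact le_max_left _ _
                exact hle.trans (Finset.le_sup' x' (Finset.mem_Icc.mpr ⟨by omega, le_rfl⟩))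
              · have hxx : x j = x' j := by rw [hx'def, Function.update_of_ne h2]
                rw [hxx]
                exact Finset.le_sup' x' (Finset.mem_Icc.mpr ⟨hj1, by omega⟩)
        rw [hseteq, ih hn1 x' hx',
          Finset.prod_Icc_succ_top (by omega : 1 ≤ n + 1), hsupself (n + 1),
          Finset.prod_congr rfl fun i hi => by rw [hsup_eq i hi]]
        ring
  intro n hn x hx
  rw [← main n hn x hx, ENNReal.ofReal_toReal (measure_ne_top P _)]
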